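/- Let f be a circuit injection from a 3-connected graph G onto a graph G'. Then for every vertex w of G', the preimage f^{-1}(S(w)) of the star of w is either a star subgraph S(v) of G for some vertex v, or an independent set of edges of G. -/

import Mathlib

open SimpleGraph

universe u v

/-- A circuit of `G` is the edge set of a cycle of `G`. -/
def IsCircuit {V : Type u} (G : SimpleGraph V) (C : Set (Sym2 V)) : Prop :=
  ∃ (x : V) (w : G.Walk x x), w.IsCycle ∧ C = {e | e ∈ w.edges}

/-- The set of vertices covered by a set of edges. -/
def circVerts {V : Type u} (C : Set (Sym2 V)) : Set V :=
  {x | ∃ e ∈ C, x ∈ e}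

/-- A set of edges is independent if its edges are pairwise nonadjacent. -/
def IndepEdges {V : Type u} (A : Set (Sym2 V)) : Prop :=
  ∀ e₁ ∈ A, ∀ e₂ ∈ A, e₁ ≠ e₂ → ∀ x : V, x ∈ e₁ → x ∉ e₂

/-- 2-connected: connected, at least 3 vertices, and deleting any one vertex
leaves the graph connected. -/
def TwoConnected {V : Type u} (G : SimpleGraph V) : Prop :=
  G.Connected ∧ (3 : Cardinal) ≤ Cardinal.mk V ∧
    ∀ x : V, (G.induce {x}ᶜ).Connected

/-- 3-connected: at least 4 vertices and deleting any two vertices leaves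
the graph connected. -/
def ThreeConnected {V : Type u} (G : SimpleGraph V) : Prop :=
  (4 : Cardinal) ≤ Cardinal.mk V ∧
    ∀ x y : V, (G.induce ({x, y} : Set V)ᶜ).Connected

/-- k-connected: more than k vertices and deleting any set of fewer than k
vertices leaves the graph connected. -/
def KConnected {V : Type u} (k : ℕ) (G : SimpleGraph V) : Prop :=
  (k : Cardinal) < Cardinal.mk V ∧
    ∀ s : Set V, s.Finite → Nat.card s < k → (G.induce sᶜ).Connected

/-- The image of a set of edges of `G` under an edge map `f`. -/
def mapEdges {V : Type u} {V' : Type v} (G : SimpleGraph V) (G' : SimpleGraph V')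
    (f : G.edgeSet → G'.edgeSet) (C : Set (Sym2 V)) : Set (Sym2 V') :=
  {e' | ∃ e : G.edgeSet, (e : Sym2 V) ∈ C ∧ (f e : Sym2 V') = e'}

/-- The preimage of a set of edges of `G'` under an edge map `f`. -/
def preimEdges {V : Type u} {V' : Type v} (G : SimpleGraph V) (G' : SimpleGraph V')
    (f : G.edgeSet → G'.edgeSet) (S : Set (Sym2 V')) : Set (Sym2 V) :=
  {e | ∃ he : e ∈ G.edgeSet, (f ⟨e, he⟩ : Sym2 V') ∈ S}

/-- A circuit injection from `G` onto `G'`: an injective, surjective map on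
edges carrying every circuit of `G` to a circuit of `G'`, where `G'` has no
isolated vertices. -/
def IsCircuitInjection {V : Type u} {V' : Type v} (G : SimpleGraph V) (G' : SimpleGraph V')
    (f : G.edgeSet → G'.edgeSet) : Prop :=
  Function.Injective f ∧ Function.Surjective f ∧
    (∀ C : Set (Sym2 V), IsCircuit G C → IsCircuit G' (mapEdges G G' f C)) ∧
    ∀ x : V', ∃ y : V', G'.Adj x y

/-- `G` contains a subgraph of type X with connectors `e₁`, `e₂`, `e₃`:
two vertex-disjoint circuits `CA`, `CB`, edges `e₁ = (a₁,b₁)`, `e₂ = (a₂,b₂)`,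
and a path from `a₃` to `b₃` internally disjoint from both circuits, with
`a₁,a₂,a₃` distinct on `CA` and `b₁,b₂,b₃` distinct on `CB`, and `e₃` an edge
of the path. -/
def IsTypeXWith {V : Type u} (G : SimpleGraph V) (e₁ e₂ e₃ : Sym2 V) : Prop :=
  ∃ (a₁ a₂ a₃ b₁ b₂ b₃ : V) (CA CB : Set (Sym2 V)) (P : G.Walk a₃ b₃),
    IsCircuit G CA ∧ IsCircuit G CB ∧
    Disjoint (circVerts CA) (circVerts CB) ∧
    a₁ ∈ circVerts CA ∧ a₂ ∈ circVerts CA ∧ a₃ ∈ circVerts CA ∧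
    b₁ ∈ circVerts CB ∧ b₂ ∈ circVerts CB ∧ b₃ ∈ circVerts CB ∧
    a₁ ≠ a₂ ∧ a₁ ≠ a₃ ∧ a₂ ≠ a₃ ∧ b₁ ≠ b₂ ∧ b₁ ≠ b₃ ∧ b₂ ≠ b₃ ∧
    G.Adj a₁ b₁ ∧ G.Adj a₂ b₂ ∧ e₁ = s(a₁, b₁) ∧ e₂ = s(a₂, b₂) ∧
    P.IsPath ∧
    (∀ x ∈ P.support, x ≠ a₃ → x ≠ b₃ → x ∉ circVerts CA ∪ circVerts CB) ∧
    e₃ ∈ P.edges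

/-- `G` is (all of) a graph of type X with connectors `e₁`, `e₂`, `e₃`. -/
def IsTypeXGraph {V : Type u} (G : SimpleGraph V) (e₁ e₂ e₃ : Sym2 V) : Prop :=
  ∃ (a₁ a₂ a₃ b₁ b₂ b₃ : V) (CA CB : Set (Sym2 V)) (P : G.Walk a₃ b₃),
    IsCircuit G CA ∧ IsCircuit G CB ∧
    Disjoint (circVerts CA) (circVerts CB) ∧
    a₁ ∈ circVerts CA ∧ a₂ ∈ circVerts CA ∧ a₃ ∈ circVerts CA ∧
    b₁ ∈ circVerts CB ∧ b₂ ∈ circVerts CB ∧ b₃ ∈ circVerts CB ∧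
    a₁ ≠ a₂ ∧ a₁ ≠ a₃ ∧ a₂ ≠ a₃ ∧ b₁ ≠ b₂ ∧ b₁ ≠ b₃ ∧ b₂ ≠ b₃ ∧
    G.Adj a₁ b₁ ∧ G.Adj a₂ b₂ ∧ e₁ = s(a₁, b₁) ∧ e₂ = s(a₂, b₂) ∧
    P.IsPath ∧
    (∀ x ∈ P.support, x ≠ a₃ → x ≠ b₃ → x ∉ circVerts CA ∪ circVerts CB) ∧
    e₃ ∈ P.edges ∧
    G.edgeSet = CA ∪ CB ∪ {e₁, e₂} ∪ {e | e ∈ P.edges}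


open SimpleGraph


open Classical in
/-- Counting edges of a path that satisfy a predicate concentrated on a vertex. -/
lemma path_countP {V : Type u} {G : SimpleGraph V} {a b : V} (p : G.Walk a b)
    (hp : p.IsPath) (w : V) :
    p.edges.countP (fun e => decide (w ∈ e)) =
      if w ∈ p.support then (if w = a then (if a = b then 0 else 1)
        else if w = b then 1 else 2) else 0 := by
  induction p with
  | nil =>
    rename_i z
    simp only [Walk.edges_nil, List.countP_nil, Walk.support_nil, List.mem_singleton]
    by_cases h : w = z <;> simp [h]
  | @cons a c b h q ih =>
    have hq : q.IsPath := hp.of_cons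
    have hanq : a ∉ q.support := (Walk.cons_isPath_iff h q).mp hp |>.2
    have hab : a ≠ b := fun hab => hanq (hab ▸ q.end_mem_support)
    have hmem : ∀ y, (decide (y ∈ s(a,c)) : Bool) = true ↔ (y = a ∨ y = c) := by
      intro y; simp [Sym2.mem_iff]
    rw [Walk.edges_cons, List.countP_cons]
    rw [ih hq]
    by_cases hwa : w = a
    · subst hwa
      have h1 : w ∉ q.support := hanq
      simp only [h1, if_neg, if_false]
      simp [Walk.support_cons, hab, Sym2.mem_iff]
    · by_cases hwc : w = c
      · subst hwc
        have hws : w ∈ q.support := q.start_mem_support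
        by_cases hwb : w = b
        · -- q : Walk w b with w = b and q is a path: q must be nil
          subst hwb
          have : q.Nil := by
            by_contra hnn
            obtain ⟨x, h', q', rfl⟩ := Walk.not_nil_iff.mp hnn
            exact ((Walk.cons_isPath_iff h' q').mp hq).2 q'.end_mem_support
          simp [hws, hwa, Walk.support_cons, Sym2.mem_iff]
        · simp [hws, hwa, hwb, Walk.support_cons, Sym2.mem_iff]
      · have hedge : (decide (w ∈ s(a,c)) : Bool) = false := by
          simp [Sym2.mem_iff, hwa, hwc]
        rw [hedge]
        simp only [cond_false, Walk.support_cons, List.mem_cons]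
        by_cases hws : w ∈ q.support
        · simp [hws, hwa, hwc]
        · have : ¬ (w = a ∨ w ∈ q.support) := by tauto
          simp [hws, hwa, hwc, this]

open Classical in
/-- On a cycle, each vertex of the cycle is met by exactly two edges. -/
lemma cycle_countP {V : Type u} {G : SimpleGraph V} {x : V} (c : G.Walk x x)
    (hc : c.IsCycle) (w : V) :
    c.edges.countP (fun e => decide (w ∈ e)) = if w ∈ c.support then 2 else 0 := by
  cases c with
  | nil => exact absurd hc (by simp [Walk.isCycle_def])
  | @cons _ y _ h q =>
    have hq : q.IsPath := ((Walk.cons_isCycle_iff q h).mp hc).1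
    have hyx : y ≠ x := fun hyx => by
      subst hyx
      exact G.loopless.irrefl _ h
    rw [Walk.edges_cons, List.countP_cons, path_countP q hq w]
    by_cases hwx : w = x
    · subst hwx
      have : w ∈ q.support := q.end_mem_support
      simp [this, Walk.support_cons, Ne.symm hyx, hyx, Sym2.mem_iff]
    · by_cases hwy : w = y
      · subst hwy
        have : w ∈ q.support := q.start_mem_support
        simp [this, hwx, Walk.support_cons, Sym2.mem_iff]
      · have hedge : (decide (w ∈ s(x,y)) : Bool) = false := by
          simp [Sym2.mem_iff, hwx, hwy]
        rw [hedge]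
        by_cases hws : w ∈ q.support
        · simp [hws, hwx, hwy, Walk.support_cons]
        · simp [hws, hwx, Walk.support_cons]
/-- Count transfer along an injection between nodup lists. -/
lemma countP_eq_of_bij {α : Type*} {β : Type*} (l : List α) (m : List β)
    (hl : l.Nodup) (hm : m.Nodup) (p : α → Bool) (q : β → Bool) (F : α → β)
    (hmap : ∀ a ∈ l, p a = true → (F a ∈ m ∧ q (F a) = true))
    (hinj : ∀ a₁ ∈ l, ∀ a₂ ∈ l, F a₁ = F a₂ → a₁ = a₂)
    (hsurj : ∀ b ∈ m, q b = true → ∃ a, a ∈ l ∧ p a = true ∧ F a = b) :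
    l.countP p = m.countP q := by
  have h1 : ((l.filter p).map F).Nodup := by
    refine (hl.filter p).map_on ?_
    intro a ha a' ha' hFF
    exact hinj a (List.mem_of_mem_filter ha) a' (List.mem_of_mem_filter ha') hFF
  have h2 : (m.filter q).Nodup := hm.filter q
  have hmemiff : ∀ b, b ∈ (l.filter p).map F ↔ b ∈ m.filter q := by
    intro b
    constructor
    · rintro hb
      obtain ⟨a, ha, rfl⟩ := List.mem_map.mp hb
      obtain ⟨ha1, ha2⟩ := List.mem_filter.mp ha
      obtain ⟨hm1, hm2⟩ := hmap a ha1 ha2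
      exact List.mem_filter.mpr ⟨hm1, hm2⟩
    · intro hb
      obtain ⟨hb1, hb2⟩ := List.mem_filter.mp hb
      obtain ⟨a, ha, hpa, rfl⟩ := hsurj b hb1 hb2
      exact List.mem_map.mpr ⟨a, List.mem_filter.mpr ⟨ha, hpa⟩, rfl⟩
  have hperm : List.Perm ((l.filter p).map F) (m.filter q) :=
    (List.perm_ext_iff_of_nodup h1 h2).mpr hmemiff
  have := hperm.length_eq
  rw [List.length_map] at this
  rw [List.countP_eq_length_filter, List.countP_eq_length_filter, this]

open Classical in
/-- Every cycle of `G` contains either 0 or 2 edges of the preimage of a star. -/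
lemma preim_count_cycle {V : Type u} {V' : Type v} {G : SimpleGraph V} {G' : SimpleGraph V'}
    (f : G.edgeSet → G'.edgeSet) (hf : IsCircuitInjection G G' f) (w : V')
    {x : V} (c : G.Walk x x) (hc : c.IsCycle) :
    c.edges.countP (fun e => decide (e ∈ preimEdges G G' f (G'.incidenceSet w))) = 0 ∨
      c.edges.countP (fun e => decide (e ∈ preimEdges G G' f (G'.incidenceSet w))) = 2 := by
  obtain ⟨x', c', hc', hEq⟩ := hf.2.2.1 {e | e ∈ c.edges} ⟨x, c, hc, rfl⟩
  set A := preimEdges G G' f (G'.incidenceSet w) with hA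
  have hmemA : ∀ (e : Sym2 V) (he : e ∈ G.edgeSet),
      e ∈ A ↔ w ∈ (f ⟨e, he⟩ : Sym2 V') := by
    intro e he
    constructor
    · rintro ⟨he', hw⟩
      exact (G'.edge_mem_incidenceSet_iff).mp hw
    · intro hw
      exact ⟨he, (G'.edge_mem_incidenceSet_iff).mpr hw⟩
  have hlnd : c.edges.Nodup := hc.isCircuit.isTrail.edges_nodup
  have hmnd : c'.edges.Nodup := hc'.isCircuit.isTrail.edges_nodup
  set F : Sym2 V → Sym2 V' := fun e =>
    if he : e ∈ G.edgeSet then (f ⟨e, he⟩ : Sym2 V') else s(w, w) with hF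
  have key : c.edges.countP (fun e => decide (e ∈ A)) =
      c'.edges.countP (fun e => decide (w ∈ e)) := by
    apply countP_eq_of_bij _ _ hlnd hmnd _ _ F
    · intro e he hpe
      have heE : e ∈ G.edgeSet := c.edges_subset_edgeSet he
      have heA : e ∈ A := by simpa using hpe
      have hFe : F e = (f ⟨e, heE⟩ : Sym2 V') := by simp [hF, heE]
      constructor
      · have : F e ∈ mapEdges G G' f {e | e ∈ c.edges} := by
          rw [hFe]; exact ⟨⟨e, heE⟩, he, rfl⟩
        rw [hEq] at this
        exact this
      · rw [hFe]
        simpa using (hmemA e heE).mp heA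
    · intro e₁ h₁ e₂ h₂ hFF
      have h₁E : e₁ ∈ G.edgeSet := c.edges_subset_edgeSet h₁
      have h₂E : e₂ ∈ G.edgeSet := c.edges_subset_edgeSet h₂
      rw [hF] at hFF
      simp only [h₁E, h₂E, dif_pos] at hFF
      have := hf.1 (Subtype.ext hFF)
      exact congrArg Subtype.val this
    · intro e' he' hwe'
      have : e' ∈ mapEdges G G' f {e | e ∈ c.edges} := by rw [hEq]; exact he'
      obtain ⟨⟨e, heE⟩, hce, hfe⟩ := this
      refine ⟨e, hce, ?_, ?_⟩
      · have heA : e ∈ A := (hmemA e heE).mpr (by rw [hfe]; simpa using hwe')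
        simpa using heA
      · simp [hF, heE, hfe]
  rw [key, cycle_countP c' hc' w]
  by_cases h : w ∈ c'.support <;> simp [h]
section WalkUtils

variable {W : Type*} {H : SimpleGraph W}

/-- A hom from an induced subgraph into the ambient graph. -/
def inducedHom (H : SimpleGraph W) (s : Set W) : (H.induce s) →g H where
  toFun := Subtype.val
  map_rel' := fun h => h

/-- If the induced graph on `s` is connected, any two vertices of `s` are joined
by a path with support inside `s`. -/
lemma path_in {s : Set W} (hcon : (H.induce s).Connected) {a b : W}
    (ha : a ∈ s) (hb : b ∈ s) :
    ∃ R : H.Walk a b, R.IsPath ∧ ∀ y ∈ R.support, y ∈ s := by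
  classical
  obtain ⟨w⟩ := hcon.preconnected ⟨a, ha⟩ ⟨b, hb⟩
  set w' : H.Walk a b := w.map (inducedHom H s) with hw'
  have hsup : ∀ y ∈ w'.support, y ∈ s := by
    intro y hy
    have hy2 : y ∈ (w.map (inducedHom H s)).support := hy
    rw [Walk.support_map] at hy2
    obtain ⟨z, _, rfl⟩ := List.mem_map.mp hy2
    exact z.2
  refine ⟨w'.toPath, w'.toPath.2, fun y hy => hsup y (w'.support_toPath_subset hy)⟩

/-- Appending two paths that only share the junction vertex. -/
lemma isPath_append' {a b c : W} {p : H.Walk a b} {q : H.Walk b c}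
    (hp : p.IsPath) (hq : q.IsPath)
    (h : ∀ y ∈ p.support, y ∈ q.support → y = b) : (p.append q).IsPath := by
  rw [Walk.isPath_def, Walk.support_append]
  have hqc : q.support = b :: q.support.tail := q.support_eq_cons
  have hqnd : q.support.Nodup := hq.support_nodup
  rw [hqc] at hqnd
  have hbt : b ∉ q.support.tail := (List.nodup_cons.mp hqnd).1
  have htnd : q.support.tail.Nodup := (List.nodup_cons.mp hqnd).2
  refine List.Nodup.append hp.support_nodup htnd ?_
  intro y hyp hyt
  have : y ∈ q.support := by rw [hqc]; exact List.mem_cons_of_mem _ hyt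
  exact hbt ((h y hyp this) ▸ hyt)

/-- Extending a path by one edge at the end. -/
lemma isPath_concat' {a b c : W} {p : H.Walk a b} (hp : p.IsPath) (h : H.Adj b c)
    (hc : c ∉ p.support) : (p.concat h).IsPath := by
  rw [Walk.concat]
  refine isPath_append' hp ((Walk.cons_isPath_iff _ _).mpr ⟨Walk.IsPath.nil, by simp; exact h.ne⟩) ?_
  intro y hyp hyc
  have hyc' : y = b ∨ y = c := by simpa using hyc
  rcases hyc' with rfl | rfl
  · rfl
  · exact absurd hyp hc

/-- Theendpoint does not appear in a proper `takeUntil` prefix of a path. -/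
lemma takeUntil_not_end [DecidableEq W] {a b z : W} {p : H.Walk a b} (hp : p.IsPath)
    (hz : z ∈ p.support) (hzb : z ≠ b) : b ∉ (p.takeUntil z hz).support := by
  intro hbmem
  have hspec := p.take_spec hz
  have hnd : p.support.Nodup := hp.support_nodup
  rw [← hspec, Walk.support_append] at hnd
  have hdrop : b ∈ (p.dropUntil z hz).support.tail := by
    have hend : b ∈ (p.dropUntil z hz).support := Walk.end_mem_support _
    have hcons : (p.dropUntil z hz).support = z :: (p.dropUntil z hz).support.tail :=
      Walk.support_eq_cons _
    rw [hcons] at hend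
    rcases List.mem_cons.mp hend with rfl | h
    · exact absurd rfl hzb
    · exact h
  exact (List.disjoint_of_nodup_append hnd) hbmem hdrop

/-- Last vertex of a walk belonging to a set, with the corresponding suffix. -/
lemma exists_last_suffix {a b : W} (R : H.Walk a b) (S : Set W) :
    (∃ (z : W) (R₂ : H.Walk z b), z ∈ S ∧ z ∈ R.support ∧
      (∀ y ∈ R₂.support, y ∈ R.support) ∧ (R.IsPath → R₂.IsPath) ∧
      (∀ y ∈ R₂.support, y ∈ S → y = z)) ∨ (∀ y ∈ R.support, y ∉ S) := by
  induction R with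
  | nil =>
    rename_i z0
    by_cases hz : z0 ∈ S
    · exact Or.inl ⟨z0, Walk.nil, hz, by simp, by simp, fun h => h, by simp⟩
    · right; intro y hy; simp only [Walk.support_nil, List.mem_singleton] at hy
      subst hy; exact hz
  | @cons a c b h R' ih =>
    rcases ih with ⟨z, R₂, hzS, hzsup, hsub, hpath, hlast⟩ | hnone
    · refine Or.inl ⟨z, R₂, hzS, ?_, ?_, ?_, hlast⟩
      · simp only [Walk.support_cons, List.mem_cons]; exact Or.inr hzsup
      · intro y hy; simp only [Walk.support_cons, List.mem_cons]; exact Or.inr (hsub y hy)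
      · intro hP; exact hpath hP.of_cons
    · by_cases ha : a ∈ S
      · refine Or.inl ⟨a, Walk.cons h R', ha, Walk.start_mem_support _,
          fun y hy => hy, fun h => h, ?_⟩
        intro y hy hyS
        rcases List.mem_cons.mp (by simpa [Walk.support_cons] using hy) with rfl | hy'
        · rfl
        · exact absurd hyS (hnone y hy')
      · right; intro y hy
        rcases List.mem_cons.mp (by simpa [Walk.support_cons] using hy) with rfl | hy'
        · exact ha
        · exact hnone y hy'

/-- Reachability in an induced subgraph from a walk staying inside the set. -/
lemma reachable_induce_of_walk {s : Set W} :
    ∀ {a b : W} (w : H.Walk a b), (∀ y ∈ w.support, y ∈ s) →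
      ∀ (ha : a ∈ s) (hb : b ∈ s), (H.induce s).Reachable ⟨a, ha⟩ ⟨b, hb⟩ := by
  intro a b w
  induction w with
  | nil => intro _ ha hb; rfl
  | @cons a c b h w' ih =>
    intro hsup ha hb
    have hc : c ∈ s := hsup c (by simp [Walk.support_cons])
    have hadj : (H.induce s).Adj ⟨a, ha⟩ ⟨c, hc⟩ := h
    exact hadj.reachable.trans (ih (fun y hy => hsup y (by simp [Walk.support_cons]; right; exact hy)) hc hb)

end WalkUtils
section C2

variable {W : Type*} {H : SimpleGraph W}

lemma mem_concat_support {a b c y : W} {p : H.Walk a b} {h : H.Adj b c}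
    (hy : y ∈ (p.concat h).support) : y ∈ p.support ∨ y = c := by
  rw [Walk.support_concat] at hy
  rcases List.mem_append.mp hy with h1 | h1
  · exact Or.inl h1
  · simp at h1; exact Or.inr h1

lemma mem_append_support {a b c y : W} {p : H.Walk a b} {q : H.Walk b c}
    (hy : y ∈ (p.append q).support) : y ∈ p.support ∨ y ∈ q.support := by
  rw [Walk.support_append] at hy
  rcases List.mem_append.mp hy with h1 | h1
  · exact Or.inl h1
  · right
    rw [q.support_eq_cons]
    exact List.mem_cons_of_mem _ h1

lemma stepA [DecidableEq W] {a m b : W} (hba : b ≠ a) (hbm : b ≠ m)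
    (hmb : H.Adj m b) {P Q : H.Walk a m} (hP : P.IsPath) (hQ : Q.IsPath)
    (hdj : ∀ y, y ∈ P.support → y ∈ Q.support → y = a ∨ y = m)
    (hbP : b ∈ P.support) :
    ∃ A₁ A₂ : H.Walk a b, A₁.IsPath ∧ A₂.IsPath ∧
      ∀ y, y ∈ A₁.support → y ∈ A₂.support → y = a ∨ y = b := by
  have hbQ : b ∉ Q.support := fun hbQ => by
    rcases hdj b hbP hbQ with rfl | rfl
    · exact hba rfl
    · exact hbm rfl
  refine ⟨P.takeUntil b hbP, Q.concat hmb, hP.takeUntil hbP,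
    isPath_concat' hQ hmb hbQ, ?_⟩
  intro y hy1 hy2
  have hyP : y ∈ P.support := Walk.support_takeUntil_subset _ hbP hy1
  rcases mem_concat_support hy2 with hyQ | rfl
  · rcases hdj y hyP hyQ with rfl | rfl
    · exact Or.inl rfl
    · exact absurd hy1 (takeUntil_not_end hP hbP hbm)
  · exact Or.inr rfl

lemma stepB [DecidableEq W] {a m b : W} (hba : b ≠ a) (hbm : b ≠ m)
    (hmb : H.Adj m b) {P Q : H.Walk a m} (hP : P.IsPath) (hQ : Q.IsPath)
    (hdj : ∀ y, y ∈ P.support → y ∈ Q.support → y = a ∨ y = m)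
    (hbP : b ∉ P.support) (hbQ : b ∉ Q.support)
    {z : W} (hzP : z ∈ P.support) {R₂ : H.Walk z b} (hR₂ : R₂.IsPath)
    (hmR₂ : m ∉ R₂.support)
    (hlast : ∀ y ∈ R₂.support, (y ∈ P.support ∨ y ∈ Q.support) → y = z) :
    ∃ A₁ A₂ : H.Walk a b, A₁.IsPath ∧ A₂.IsPath ∧
      ∀ y, y ∈ A₁.support → y ∈ A₂.support → y = a ∨ y = b := by
  have hzm : z ≠ m := fun h => hmR₂ (h ▸ R₂.start_mem_support)
  refine ⟨(P.takeUntil z hzP).append R₂, Q.concat hmb, ?_,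
    isPath_concat' hQ hmb hbQ, ?_⟩
  · refine isPath_append' (hP.takeUntil hzP) hR₂ ?_
    intro y hy1 hy2
    exact hlast y hy2 (Or.inl (Walk.support_takeUntil_subset _ hzP hy1))
  · intro y hy1 hy2
    rcases mem_append_support hy1 with hyT | hyR
    · have hyP : y ∈ P.support := Walk.support_takeUntil_subset _ hzP hyT
      rcases mem_concat_support hy2 with hyQ | rfl
      · rcases hdj y hyP hyQ with rfl | rfl
        · exact Or.inl rfl
        · exact absurd hyT (takeUntil_not_end hP hzP hzm)
      · exact absurd hyP hbP
    · rcases mem_concat_support hy2 with hyQ | rfl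
      · have hyz : y = z := hlast y hyR (Or.inr hyQ)
        subst hyz
        rcases hdj y hzP hyQ with rfl | rfl
        · exact Or.inl rfl
        · exact absurd rfl hzm
      · exact Or.inr rfl

lemma c2 (H : SimpleGraph W) (hH : ∀ z : W, (H.induce {z}ᶜ).Connected)
    (hc : H.Connected) : ∀ (n : ℕ) (a b : W), a ≠ b → H.dist a b ≤ n →
    ∃ P Q : H.Walk a b, P.IsPath ∧ Q.IsPath ∧
      ∀ y, y ∈ P.support → y ∈ Q.support → y = a ∨ y = b := by
  classical
  intro n
  induction n with
  | zero =>
    intro a b hab hd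
    exact absurd (Nat.le_zero.mp hd) (hc.pos_dist_of_ne hab).ne'
  | succ n IH =>
    intro a b hab hd
    by_cases hd' : H.dist a b ≤ n
    · exact IH a b hab hd'
    have hdeq : H.dist a b = n + 1 := le_antisymm hd (not_le.mp hd')
    by_cases hn : n = 0
    · subst hn
      have hadj : H.Adj a b := SimpleGraph.dist_eq_one_iff_adj.mp hdeq
      refine ⟨Walk.cons hadj Walk.nil, Walk.cons hadj Walk.nil, ?_, ?_, ?_⟩
      · simp [Walk.cons_isPath_iff, hab]
      · simp [Walk.cons_isPath_iff, hab]
      · intro y hy _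
        simpa using hy
    have hn1 : 1 ≤ n := Nat.one_le_iff_ne_zero.mpr hn
    obtain ⟨W₀, hW₀⟩ := hc.exists_walk_length_eq_dist a b
    have hne : ¬ W₀.reverse.Nil := Walk.not_nil_of_ne (Ne.symm hab)
    obtain ⟨m, hbm, Wr, hWr⟩ := Walk.not_nil_iff.mp hne
    have hlen : Wr.length = n := by
      have h1 := congrArg Walk.length hWr
      rw [Walk.length_reverse, hW₀, hdeq, Walk.length_cons] at h1
      omega
    have hdm : H.dist a m = n := by
      have h1 : H.dist a m ≤ n := by
        have := H.dist_le Wr.reverse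
        rwa [Walk.length_reverse, hlen] at this
      have h2 : H.dist a b ≤ H.dist a m + H.dist m b := hc.dist_triangle
      have h3 : H.dist m b ≤ 1 := by
        have := H.dist_le (Walk.cons hbm.symm Walk.nil)
        simpa using this
      omega
    have ham : a ≠ m := by
      intro h
      rw [← h, SimpleGraph.dist_self] at hdm
      omega
    obtain ⟨P, Q, hP, hQ, hdj⟩ := IH a m ham (le_of_eq hdm)
    have hba : b ≠ a := Ne.symm hab
    have hbm' : b ≠ m := by
      intro h
      rw [← h] at hdm
      omega
    by_cases hbP : b ∈ P.support
    · exact stepA hba hbm' hbm.symm hP hQ hdj hbP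
    by_cases hbQ : b ∈ Q.support
    · obtain ⟨A₁, A₂, h1, h2, h3⟩ :=
        stepA hba hbm' hbm.symm hQ hP (fun y hy1 hy2 => hdj y hy2 hy1) hbQ
      exact ⟨A₁, A₂, h1, h2, h3⟩
    obtain ⟨R, hR, hRm⟩ := path_in (hH m) (show a ∈ ({m}ᶜ : Set W) from ham)
      (show b ∈ ({m}ᶜ : Set W) from hbm')
    rcases exists_last_suffix R {y | y ∈ P.support ∨ y ∈ Q.support} with
      ⟨z, R₂, hzS, _, hsub, hpath, hlast⟩ | hnone
    · have hR₂ : R₂.IsPath := hpath hR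
      have hmR₂ : m ∉ R₂.support := fun hm => (hRm m (hsub m hm)) rfl
      rcases hzS with hzP | hzQ
      · exact stepB hba hbm' hbm.symm hP hQ hdj hbP hbQ hzP hR₂ hmR₂ hlast
      · obtain ⟨A₁, A₂, h1, h2, h3⟩ := stepB hba hbm' hbm.symm hQ hP
          (fun y hy1 hy2 => hdj y hy2 hy1) hbQ hbP hzQ hR₂ hmR₂
          (fun y hy hor => hlast y hy (Or.symm hor))
        exact ⟨A₁, A₂, h1, h2, h3⟩
    · exact absurd (show a ∈ {y | y ∈ P.support ∨ y ∈ Q.support} from Or.inl P.start_mem_support) (hnone a R.start_mem_support)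

end C2
section Aux

variable {V : Type u}

/-- Vertex type of the auxiliary graph: `G - v` plus two extra vertices. -/
abbrev AuxW (V : Type u) (v : V) := {z : V // z ≠ v} ⊕ Bool

/-- Adjacency of the auxiliary graph: `G - v`, with `inr false` joined to `p, q`
and `inr true` joined to `u, t`. -/
def auxAdj (G : SimpleGraph V) (v u t p q : V) : AuxW V v → AuxW V v → Prop
  | Sum.inl a, Sum.inl b => G.Adj a.1 b.1
  | Sum.inl a, Sum.inr true => a.1 = u ∨ a.1 = t
  | Sum.inl a, Sum.inr false => a.1 = p ∨ a.1 = q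
  | Sum.inr true, Sum.inl a => a.1 = u ∨ a.1 = t
  | Sum.inr false, Sum.inl a => a.1 = p ∨ a.1 = q
  | Sum.inr _, Sum.inr _ => False

def auxG (G : SimpleGraph V) (v u t p q : V) : SimpleGraph (AuxW V v) where
  Adj := auxAdj G v u t p q
  symm := by
    refine ⟨?_⟩
    rintro (a | (_ | _)) (b | (_ | _)) h <;>
      first
        | exact h.elim
        | exact G.adj_symm h
        | exact h
  loopless := by
    refine ⟨?_⟩
    rintro (a | (_ | _)) h
    · exact G.loopless.irrefl _ h
    · exact h
    · exact h

lemma aux_false_adj {G : SimpleGraph V} {v u t p q : V} {y : AuxW V v}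
    (h : (auxG G v u t p q).Adj (Sum.inr false) y) :
    ∃ a : {z : V // z ≠ v}, y = Sum.inl a ∧ (a.1 = p ∨ a.1 = q) := by
  match y with
  | Sum.inl a => exact ⟨a, rfl, h⟩
  | Sum.inr true => exact h.elim
  | Sum.inr false => exact h.elim

lemma aux_true_adj {G : SimpleGraph V} {v u t p q : V} {y : AuxW V v}
    (h : (auxG G v u t p q).Adj (Sum.inr true) y) :
    ∃ a : {z : V // z ≠ v}, y = Sum.inl a ∧ (a.1 = u ∨ a.1 = t) := by
  match y with
  | Sum.inl a => exact ⟨a, rfl, h⟩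
  | Sum.inr true => exact h.elim
  | Sum.inr false => exact h.elim

/-- Forgetful map back to `V`. -/
def unlift (v : V) : AuxW V v → V
  | Sum.inl c => c.1
  | Sum.inr _ => v

lemma lift_walk {G : SimpleGraph V} {v u t p q : V} :
    ∀ (a b : V) (w : G.Walk a b), (∀ y ∈ w.support, y ≠ v) →
      ∀ (ha : a ≠ v) (hb : b ≠ v),
      ∃ w' : (auxG G v u t p q).Walk (Sum.inl ⟨a, ha⟩) (Sum.inl ⟨b, hb⟩),
        ∀ y ∈ w'.support, ∃ c : {z : V // z ≠ v}, c.1 ∈ w.support ∧ y = Sum.inl c := by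
  intro a b w
  induction w with
  | nil =>
    intro _ ha hb
    refine ⟨Walk.nil, ?_⟩
    intro y hy
    simp only [Walk.support_nil, List.mem_singleton] at hy
    subst hy
    exact ⟨⟨_, ha⟩, by simp, rfl⟩
  | @cons a c b h w₂ ih =>
    intro hav ha hb
    have hc : c ≠ v := hav c (by simp [Walk.support_cons])
    obtain ⟨w₂', hw₂'⟩ := ih (fun y hy => hav y (by simp [Walk.support_cons]; right; exact hy)) hc hb
    have hadj : (auxG G v u t p q).Adj (Sum.inl ⟨a, ha⟩) (Sum.inl ⟨c, hc⟩) := h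
    refine ⟨Walk.cons hadj w₂', ?_⟩
    intro y hy
    rcases List.mem_cons.mp (by simpa [Walk.support_cons] using hy) with rfl | hy'
    · exact ⟨⟨a, ha⟩, by simp [Walk.support_cons], rfl⟩
    · obtain ⟨e, he, rfl⟩ := hw₂' y hy'
      exact ⟨e, by simp [Walk.support_cons]; right; exact he, rfl⟩

lemma extract_walk {G : SimpleGraph V} {v u t p q : V} :
    ∀ (s r : AuxW V v) (w' : (auxG G v u t p q).Walk s r),
      (∀ y ∈ w'.support, ∃ c : {z : V // z ≠ v}, y = Sum.inl c) →
      ∀ (a b : {z : V // z ≠ v}), s = Sum.inl a → r = Sum.inl b →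
      ∃ w : G.Walk a.1 b.1, w.support = w'.support.map (unlift v) := by
  intro s r w'
  induction w' with
  | nil =>
    intro _ a b hs hr
    obtain rfl : a = b := Sum.inl.inj (hs.symm.trans hr)
    subst hs
    exact ⟨Walk.nil, by simp [unlift]⟩
  | @cons s mid r h w₂ ih =>
    intro hall a b hs hr
    subst hs
    obtain ⟨c, rfl⟩ := hall mid (by simp [Walk.support_cons])
    have hadj : G.Adj a.1 c.1 := h
    obtain ⟨w₂', hw₂'⟩ := ih (fun y hy => hall y (by simp [Walk.support_cons]; right; exact hy)) c b rfl hr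
    refine ⟨Walk.cons hadj w₂', ?_⟩
    simp only [Walk.support_cons, List.map_cons, List.cons.injEq]
    exact ⟨rfl, hw₂'⟩

/-- A path in `G` avoiding two prescribed vertices, from 3-connectivity. -/
lemma path_avoid {G : SimpleGraph V} (h3 : ThreeConnected G) (z₁ z₂ a b : V)
    (ha1 : a ≠ z₁) (ha2 : a ≠ z₂) (hb1 : b ≠ z₁) (hb2 : b ≠ z₂) :
    ∃ R : G.Walk a b, R.IsPath ∧ ∀ y ∈ R.support, y ≠ z₁ ∧ y ≠ z₂ := by
  obtain ⟨R, hR, hmem⟩ := path_in (h3.2 z₁ z₂)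
    (show a ∈ ({z₁, z₂} : Set V)ᶜ by simp [ha1, ha2])
    (show b ∈ ({z₁, z₂} : Set V)ᶜ by simp [hb1, hb2])
  refine ⟨R, hR, fun y hy => ?_⟩
  have := hmem y hy
  simp only [Set.mem_compl_iff, Set.mem_insert_iff, Set.mem_singleton_iff, not_or] at this
  exact this

section AuxConn

variable {G : SimpleGraph V} {v u t p q : V}
variable (h3 : ThreeConnected G) (huv : u ≠ v) (htv : t ≠ v) (hpv : p ≠ v)
  (hqv : q ≠ v) (hut : u ≠ t) (hpq : p ≠ q)

include h3 huv htv hpv hqv hut hpq in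
lemma auxG_del_connected (z : AuxW V v) :
    ((auxG G v u t p q).induce {z}ᶜ).Connected := by
  classical
  set yz := unlift v z with hyz
  have hinl_ne : ∀ (c : V) (hc : c ≠ v), c ≠ yz → (Sum.inl ⟨c, hc⟩ : AuxW V v) ≠ z := by
    intro c hc hcy heq
    cases z with
    | inl a => exact hcy (by rw [hyz, ← heq]; rfl)
    | inr b => simp at heq
  have hinl_mem : ∀ (c : V) (hc : c ≠ v), c ≠ yz →
      (Sum.inl ⟨c, hc⟩ : AuxW V v) ∈ ({z}ᶜ : Set (AuxW V v)) := by
    intro c hc hcy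
    simpa using hinl_ne c hc hcy
  have sub : ∀ (c d : V) (hc : c ≠ v) (hd : d ≠ v) (hcy : c ≠ yz) (hdy : d ≠ yz),
      ((auxG G v u t p q).induce {z}ᶜ).Reachable
        ⟨Sum.inl ⟨c, hc⟩, hinl_mem c hc hcy⟩ ⟨Sum.inl ⟨d, hd⟩, hinl_mem d hd hdy⟩ := by
    intro c d hc hd hcy hdy
    obtain ⟨R, hR, hRav⟩ := path_avoid h3 v yz c d hc hcy hd hdy
    obtain ⟨w', hw'⟩ := lift_walk (u := u) (t := t) (p := p) (q := q) c d R
      (fun y hy => (hRav y hy).1) hc hd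
    exact reachable_induce_of_walk w'
      (fun y hy => by
        obtain ⟨e, he, rfl⟩ := hw' y hy
        exact hinl_mem e.1 e.2 ((hRav e.1 he).2)) _ _
  -- hub vertex
  set u₀ : V := if u = yz then t else u with hu₀
  have hu₀v : u₀ ≠ v := by rw [hu₀]; split <;> assumption
  have hu₀y : u₀ ≠ yz := by
    rw [hu₀]; split
    · rename_i h; rw [← h]; exact Ne.symm hut
    · assumption
  have hu₀ut : u₀ = u ∨ u₀ = t := by
    rw [hu₀]; split
    · exact Or.inr rfl
    · exact Or.inl rfl
  have reachHub : ∀ (y : AuxW V v) (hy : y ∈ ({z}ᶜ : Set (AuxW V v))),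
      ((auxG G v u t p q).induce {z}ᶜ).Reachable ⟨y, hy⟩
        ⟨Sum.inl ⟨u₀, hu₀v⟩, hinl_mem u₀ hu₀v hu₀y⟩ := by
    intro y hy
    match y with
    | Sum.inl ⟨c, hc⟩ =>
      have hcy : c ≠ yz := by
        intro h
        apply hy
        show Sum.inl ⟨c, hc⟩ = z
        cases z with
        | inl a =>
          have hsub : (⟨c, hc⟩ : {z : V // z ≠ v}) = a := Subtype.ext h
          exact congrArg Sum.inl hsub
        | inr b => exact absurd (h.trans (by rw [hyz]; rfl)) hc
      exact sub c u₀ hc hu₀v hcy hu₀y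
    | Sum.inr false =>
      set p₀ : V := if p = yz then q else p with hp₀
      have hp₀v : p₀ ≠ v := by rw [hp₀]; split <;> assumption
      have hp₀y : p₀ ≠ yz := by
        rw [hp₀]; split
        · rename_i h; rw [← h]; exact Ne.symm hpq
        · assumption
      have hadj : (auxG G v u t p q).Adj (Sum.inr false) (Sum.inl ⟨p₀, hp₀v⟩) := by
        show p₀ = p ∨ p₀ = q
        rw [hp₀]; split
        · exact Or.inr rfl
        · exact Or.inl rfl
      have hstep : ((auxG G v u t p q).induce {z}ᶜ).Adj ⟨Sum.inr false, hy⟩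
          ⟨Sum.inl ⟨p₀, hp₀v⟩, hinl_mem p₀ hp₀v hp₀y⟩ := hadj.symm.symm
      exact hstep.reachable.trans (sub p₀ u₀ hp₀v hu₀v hp₀y hu₀y)
    | Sum.inr true =>
      have hadj : (auxG G v u t p q).Adj (Sum.inr true) (Sum.inl ⟨u₀, hu₀v⟩) := by
        show u₀ = u ∨ u₀ = t
        exact hu₀ut
      have hstep : ((auxG G v u t p q).induce {z}ᶜ).Adj ⟨Sum.inr true, hy⟩
          ⟨Sum.inl ⟨u₀, hu₀v⟩, hinl_mem u₀ hu₀v hu₀y⟩ := hadj.symm.symm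
      exact hstep.reachable
  rw [connected_iff]
  constructor
  · intro s₁ s₂
    have h1 := reachHub s₁.1 s₁.2
    have h2 := reachHub s₂.1 s₂.2
    exact h1.trans h2.symm
  · by_cases hz : z = Sum.inr true
    · refine ⟨⟨Sum.inr false, ?_⟩⟩
      simp [hz]
    · refine ⟨⟨Sum.inr true, ?_⟩⟩
      simpa using (Ne.symm hz)

include h3 huv hpv in
lemma auxG_connected : (auxG G v u t p q).Connected := by
  have subG : ∀ (c d : V) (hc : c ≠ v) (hd : d ≠ v),
      (auxG G v u t p q).Reachable (Sum.inl ⟨c, hc⟩) (Sum.inl ⟨d, hd⟩) := by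
    intro c d hc hd
    obtain ⟨R, hR, hRav⟩ := path_avoid h3 v v c d hc hc hd hd
    obtain ⟨w', _⟩ := lift_walk (u := u) (t := t) (p := p) (q := q) c d R
      (fun y hy => (hRav y hy).1) hc hd
    exact ⟨w'⟩
  have reachHub : ∀ y : AuxW V v, (auxG G v u t p q).Reachable y (Sum.inl ⟨u, huv⟩) := by
    intro y
    match y with
    | Sum.inl ⟨c, hc⟩ => exact subG c u hc huv
    | Sum.inr false =>
      have hadj : (auxG G v u t p q).Adj (Sum.inr false) (Sum.inl ⟨p, hpv⟩) := Or.inl rfl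
      exact hadj.reachable.trans (subG p u hpv huv)
    | Sum.inr true =>
      have hadj : (auxG G v u t p q).Adj (Sum.inr true) (Sum.inl ⟨u, huv⟩) := Or.inl rfl
      exact hadj.reachable
  rw [connected_iff]
  constructor
  · intro s₁ s₂
    exact (reachHub s₁).trans (reachHub s₂).symm
  · exact ⟨Sum.inr true⟩

end AuxConn

end Aux
section Big

variable {V : Type u}

lemma exists_concat_of_not_nil {W : Type*} {H : SimpleGraph W} {a b : W}
    (w : H.Walk a b) (h : ¬ w.Nil) :
    ∃ (c : W) (h' : H.Adj c b) (w₂ : H.Walk a c), w = w₂.concat h' := by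
  induction w using Walk.concatRec with
  | Hnil => exact absurd (by simp) h
  | Hconcat p h' _ => exact ⟨_, h', p, rfl⟩

/-- Decomposition of a path from `inr false` to `inr true` in the auxiliary graph. -/
lemma decomp {G : SimpleGraph V} {v u t p q : V}
    (P : (auxG G v u t p q).Walk (Sum.inr false) (Sum.inr true)) (hP : P.IsPath) :
    ∃ (c d : {z : V // z ≠ v}) (I : (auxG G v u t p q).Walk (Sum.inl c) (Sum.inl d)),
      (c.1 = p ∨ c.1 = q) ∧ (d.1 = u ∨ d.1 = t) ∧ I.IsPath ∧
      (∀ y ∈ I.support, ∃ e : {z : V // z ≠ v}, y = Sum.inl e) ∧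
      (∀ y ∈ I.support, y ∈ P.support) := by
  cases P with
  | @cons _ y₁ _ h₁ P₂ =>
    obtain ⟨c, rfl, hcpq⟩ := aux_false_adj h₁
    have hP₂ : P₂.IsPath := hP.of_cons
    have hnn : ¬ P₂.Nil := Walk.not_nil_of_ne (by simp)
    obtain ⟨y₂, h₂, I, rfl⟩ := exists_concat_of_not_nil P₂ hnn
    obtain ⟨d, rfl, hdut⟩ := aux_true_adj h₂.symm
    have hIsub : ∀ y ∈ I.support, y ∈ (I.concat h₂).support := by
      intro y hy
      rw [Walk.support_concat]
      exact List.mem_append_left _ hy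
    have hI : I.IsPath := by
      rw [Walk.concat] at hP₂
      exact hP₂.of_append_left
    have hnotf : (Sum.inr false : AuxW V v) ∉ (I.concat h₂).support := by
      have := hP.support_nodup
      rw [Walk.support_cons] at this
      exact (List.nodup_cons.mp this).1
    have hnott : (Sum.inr true : AuxW V v) ∉ I.support := by
      have := hP₂.support_nodup
      rw [Walk.support_concat] at this
      intro hmem
      exact (List.disjoint_of_nodup_append this) hmem (by simp)
    refine ⟨c, d, I, hcpq, hdut, hI, ?_, ?_⟩
    · intro y hy
      match y with
      | Sum.inl e => exact ⟨e, rfl⟩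
      | Sum.inr true => exact absurd hy hnott
      | Sum.inr false => exact absurd (hIsub _ hy) hnotf
    · intro y hy
      rw [Walk.support_cons]
      exact List.mem_cons_of_mem _ (hIsub _ hy)

/-- From two disjoint paths out of the endpoints of an edge, build a path through
the edge. -/
lemma assemble {G : SimpleGraph V} {v p q a b : V} (hadj : G.Adj p q)
    (W1 : G.Walk p a) (W2 : G.Walk q b) (h1 : W1.IsPath) (h2 : W2.IsPath)
    (hd : ∀ y, y ∈ W1.support → y ∈ W2.support → False)
    (hv1 : v ∉ W1.support) (hv2 : v ∉ W2.support) :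
    ∃ π : G.Walk a b, π.IsPath ∧ v ∉ π.support ∧ s(p, q) ∈ π.edges := by
  have hpW2 : p ∉ W2.support := fun h => hd p W1.start_mem_support h
  refine ⟨W1.reverse.append (Walk.cons hadj W2), ?_, ?_, ?_⟩
  · refine isPath_append' h1.reverse ((Walk.cons_isPath_iff hadj W2).mpr ⟨h2, hpW2⟩) ?_
    intro y hy1 hy2
    rw [Walk.support_reverse, List.mem_reverse] at hy1
    rw [Walk.support_cons] at hy2
    rcases List.mem_cons.mp hy2 with rfl | hy2'
    · rfl
    · exact absurd hy2' (fun h => hd y hy1 h)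
  · intro hv
    rcases mem_append_support hv with h | h
    · rw [Walk.support_reverse, List.mem_reverse] at h
      exact hv1 h
    · rw [Walk.support_cons] at h
      rcases List.mem_cons.mp h with heq | h'
      · exact hv1 (heq ▸ W1.start_mem_support)
      · exact hv2 h'
  · rw [Walk.edges_append, Walk.edges_cons]
    exact List.mem_append_right _ List.mem_cons_self

/-- In a 3-connected graph, there is a `u`–`t` path avoiding `v` and passing
through the edge `pq`, provided the five vertices are distinct. -/
lemma big {G : SimpleGraph V} (h3 : ThreeConnected G) {v u t p q : V}
    (huv : u ≠ v) (htv : t ≠ v) (hpv : p ≠ v) (hqv : q ≠ v) (hut : u ≠ t)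
    (_hup : u ≠ p) (_huq : u ≠ q) (_htp : t ≠ p) (_htq : t ≠ q)
    (hadj : G.Adj p q) :
    ∃ π : G.Walk u t, π.IsPath ∧ v ∉ π.support ∧ s(p, q) ∈ π.edges := by
  classical
  have hpq : p ≠ q := hadj.ne
  set H := auxG G v u t p q with hH
  have hHdel : ∀ z, (H.induce {z}ᶜ).Connected :=
    fun z => auxG_del_connected h3 huv htv hpv hqv hut hpq z
  have hHc : H.Connected := auxG_connected h3 huv hpv
  obtain ⟨P, Q, hP, hQ, hdj⟩ := c2 H hHdel hHc (H.dist (Sum.inr false) (Sum.inr true))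
    (Sum.inr false) (Sum.inr true) (by simp) le_rfl
  obtain ⟨c, d, I, hcpq, hdut, hI, hIinl, hIP⟩ := decomp P hP
  obtain ⟨c', d', I', hc'pq, hd'ut, hI', hI'inl, hI'Q⟩ := decomp Q hQ
  -- extract the two G-walks
  obtain ⟨wg, hwg⟩ := extract_walk _ _ I hIinl c d rfl rfl
  obtain ⟨wg', hwg'⟩ := extract_walk _ _ I' hI'inl c' d' rfl rfl
  have hwgpath : wg.IsPath := by
    rw [Walk.isPath_def, hwg]
    refine List.Nodup.map_on ?_ hI.support_nodup
    intro yA hyA yB hyB heq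
    obtain ⟨eA, rfl⟩ := hIinl yA hyA
    obtain ⟨eB, rfl⟩ := hIinl yB hyB
    exact congrArg Sum.inl (Subtype.ext heq)
  have hwg'path : wg'.IsPath := by
    rw [Walk.isPath_def, hwg']
    refine List.Nodup.map_on ?_ hI'.support_nodup
    intro yA hyA yB hyB heq
    obtain ⟨eA, rfl⟩ := hI'inl yA hyA
    obtain ⟨eB, rfl⟩ := hI'inl yB hyB
    exact congrArg Sum.inl (Subtype.ext heq)
  have hvwg : v ∉ wg.support := by
    rw [hwg]
    intro hv
    obtain ⟨y, hy, hyv⟩ := List.mem_map.mp hv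
    obtain ⟨e, rfl⟩ := hIinl y hy
    exact e.2 hyv
  have hvwg' : v ∉ wg'.support := by
    rw [hwg']
    intro hv
    obtain ⟨y, hy, hyv⟩ := List.mem_map.mp hv
    obtain ⟨e, rfl⟩ := hI'inl y hy
    exact e.2 hyv
  have hdisj : ∀ y, y ∈ wg.support → y ∈ wg'.support → False := by
    intro y hy hy'
    rw [hwg] at hy
    rw [hwg'] at hy'
    obtain ⟨yA, hyA, hyAv⟩ := List.mem_map.mp hy
    obtain ⟨yB, hyB, hyBv⟩ := List.mem_map.mp hy'
    obtain ⟨eA, rfl⟩ := hIinl yA hyA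
    obtain ⟨eB, rfl⟩ := hI'inl yB hyB
    have : eA = eB := Subtype.ext (hyAv.trans hyBv.symm)
    subst this
    rcases hdj (Sum.inl eA) (hIP _ hyA) (hI'Q _ hyB) with h | h <;> simp at h
  have hcc' : c.1 ≠ c'.1 := by
    intro h
    have hceq : c = c' := Subtype.ext h
    subst hceq
    rcases hdj (Sum.inl c) (hIP _ I.start_mem_support) (hI'Q _ I'.start_mem_support)
      with h | h <;> simp at h
  have hdd' : d.1 ≠ d'.1 := by
    intro h
    have hdeq : d = d' := Subtype.ext h
    subst hdeq
    rcases hdj (Sum.inl d) (hIP _ I.end_mem_support) (hI'Q _ I'.end_mem_support)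
      with h | h <;> simp at h
  -- identify endpoints
  have hPQ : (c.1 = p ∧ c'.1 = q) ∨ (c.1 = q ∧ c'.1 = p) := by
    rcases hcpq with h1 | h1 <;> rcases hc'pq with h2 | h2
    · exact absurd (h1.trans h2.symm) hcc'
    · exact Or.inl ⟨h1, h2⟩
    · exact Or.inr ⟨h1, h2⟩
    · exact absurd (h1.trans h2.symm) hcc'
  have hUT : (d.1 = u ∧ d'.1 = t) ∨ (d.1 = t ∧ d'.1 = u) := by
    rcases hdut with h1 | h1 <;> rcases hd'ut with h2 | h2
    · exact absurd (h1.trans h2.symm) hdd'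
    · exact Or.inl ⟨h1, h2⟩
    · exact Or.inr ⟨h1, h2⟩
    · exact absurd (h1.trans h2.symm) hdd'
  rcases hPQ with ⟨hcp, hc'q⟩ | ⟨hcq, hc'p⟩
  · -- wg : p → d, wg' : q → d'
    set Wp := wg.copy hcp rfl with hWp
    set Wq := wg'.copy hc'q rfl with hWq
    have hWp1 : Wp.IsPath := by rw [hWp, Walk.isPath_copy]; exact hwgpath
    have hWq1 : Wq.IsPath := by rw [hWq, Walk.isPath_copy]; exact hwg'path
    have hd2 : ∀ y, y ∈ Wp.support → y ∈ Wq.support → False := by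
      intro y h1 h2
      rw [hWp, Walk.support_copy] at h1
      rw [hWq, Walk.support_copy] at h2
      exact hdisj y h1 h2
    have hv1 : v ∉ Wp.support := by rw [hWp, Walk.support_copy]; exact hvwg
    have hv2 : v ∉ Wq.support := by rw [hWq, Walk.support_copy]; exact hvwg'
    rcases hUT with ⟨hdu, hd't⟩ | ⟨hdt, hd'u⟩
    · obtain ⟨π, h1, h2, h3'⟩ := assemble hadj (Wp.copy rfl hdu) (Wq.copy rfl hd't)
        (by rw [Walk.isPath_copy]; exact hWp1) (by rw [Walk.isPath_copy]; exact hWq1)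
        (by intro y hy1 hy2; rw [Walk.support_copy] at hy1 hy2; exact hd2 y hy1 hy2)
        (by rw [Walk.support_copy]; exact hv1) (by rw [Walk.support_copy]; exact hv2)
      exact ⟨π, h1, h2, h3'⟩
    · obtain ⟨π, h1, h2, h3'⟩ := assemble hadj (Wp.copy rfl hdt) (Wq.copy rfl hd'u)
        (by rw [Walk.isPath_copy]; exact hWp1) (by rw [Walk.isPath_copy]; exact hWq1)
        (by intro y hy1 hy2; rw [Walk.support_copy] at hy1 hy2; exact hd2 y hy1 hy2)
        (by rw [Walk.support_copy]; exact hv1) (by rw [Walk.support_copy]; exact hv2)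
      refine ⟨π.reverse, h1.reverse, ?_, ?_⟩
      · rw [Walk.support_reverse, List.mem_reverse]; exact h2
      · rw [Walk.edges_reverse, List.mem_reverse]; exact h3'
  · -- wg : q → d, wg' : p → d'
    set Wq := wg.copy hcq rfl with hWq
    set Wp := wg'.copy hc'p rfl with hWp
    have hWp1 : Wp.IsPath := by rw [hWp, Walk.isPath_copy]; exact hwg'path
    have hWq1 : Wq.IsPath := by rw [hWq, Walk.isPath_copy]; exact hwgpath
    have hd2 : ∀ y, y ∈ Wp.support → y ∈ Wq.support → False := by
      intro y h1 h2
      rw [hWp, Walk.support_copy] at h1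
      rw [hWq, Walk.support_copy] at h2
      exact hdisj y h2 h1
    have hv1 : v ∉ Wp.support := by rw [hWp, Walk.support_copy]; exact hvwg'
    have hv2 : v ∉ Wq.support := by rw [hWq, Walk.support_copy]; exact hvwg
    rcases hUT with ⟨hdu, hd't⟩ | ⟨hdt, hd'u⟩
    · -- Wp : p → d' = t?, d' = t; Wq : q → d = u
      obtain ⟨π, h1, h2, h3'⟩ := assemble hadj (Wp.copy rfl hd't) (Wq.copy rfl hdu)
        (by rw [Walk.isPath_copy]; exact hWp1) (by rw [Walk.isPath_copy]; exact hWq1)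
        (by intro y hy1 hy2; rw [Walk.support_copy] at hy1 hy2; exact hd2 y hy1 hy2)
        (by rw [Walk.support_copy]; exact hv1) (by rw [Walk.support_copy]; exact hv2)
      refine ⟨π.reverse, h1.reverse, ?_, ?_⟩
      · rw [Walk.support_reverse, List.mem_reverse]; exact h2
      · rw [Walk.edges_reverse, List.mem_reverse]; exact h3'
    · obtain ⟨π, h1, h2, h3'⟩ := assemble hadj (Wp.copy rfl hd'u) (Wq.copy rfl hdt)
        (by rw [Walk.isPath_copy]; exact hWp1) (by rw [Walk.isPath_copy]; exact hWq1)
        (by intro y hy1 hy2; rw [Walk.support_copy] at hy1 hy2; exact hd2 y hy1 hy2)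
        (by rw [Walk.support_copy]; exact hv1) (by rw [Walk.support_copy]; exact hv2)
      exact ⟨π, h1, h2, h3'⟩

end Big
lemma vert_mem_support_of_mem_edges {V : Type u} {G : SimpleGraph V} {a b v : V}
    {p : G.Walk a b} {e : Sym2 V} (he : e ∈ p.edges) (hv : v ∈ e) : v ∈ p.support := by
  rw [← Sym2.other_spec hv] at he
  exact Walk.fst_mem_support_of_mem_edges _ he

/-- Under a circuit injection from a 3-connected graph, the
preimage of every star is a star or an independent set of edges. -/
theorem statement3 {V : Type u} {V' : Type v} (G : SimpleGraph V) (G' : SimpleGraph V')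
    (h3 : ThreeConnected G) (f : G.edgeSet → G'.edgeSet)
    (hf : IsCircuitInjection G G' f) (w : V') :
    (∃ x : V, preimEdges G G' f (G'.incidenceSet w) = G.incidenceSet x) ∨
      IndepEdges (preimEdges G G' f (G'.incidenceSet w)) := by
  classical
  set A := preimEdges G G' f (G'.incidenceSet w) with hA
  by_cases hind : IndepEdges A
  · exact Or.inr hind
  left
  simp only [IndepEdges] at hind
  push_neg at hind
  obtain ⟨e₁, he₁, e₂, he₂, hne, v, hv1, hv2⟩ := hind
  obtain ⟨he₁E, -⟩ := id he₁
  obtain ⟨he₂E, -⟩ := id he₂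
  set u := Sym2.Mem.other hv1 with hudef
  set t := Sym2.Mem.other hv2 with htdef
  have hu : s(v, u) = e₁ := Sym2.other_spec hv1
  have ht : s(v, t) = e₂ := Sym2.other_spec hv2
  have hadj1 : G.Adj v u := G.mem_edgeSet.mp (hu ▸ he₁E)
  have hadj2 : G.Adj v t := G.mem_edgeSet.mp (ht ▸ he₂E)
  have hut : u ≠ t := fun h => hne (by rw [← hu, ← ht, h])
  have huv : u ≠ v := hadj1.ne'
  have htv : t ≠ v := hadj2.ne'
  -- A ⊆ star at v
  have hstar : ∀ g ∈ A, v ∈ g := by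
    by_contra hcon
    push_neg at hcon
    obtain ⟨g, hgA, hgv⟩ := hcon
    obtain ⟨hgE, -⟩ := id hgA
    -- find a u-t path avoiding v through g
    have hπ : ∃ π : G.Walk u t, π.IsPath ∧ v ∉ π.support ∧ g ∈ π.edges := by
      revert hgE hgA hgv
      induction g using Sym2.ind with
      | _ p q =>
        intro hgA hgv hgE
        have hpv : p ≠ v := fun h => hgv (by rw [← h]; exact Sym2.mem_mk_left p q)
        have hqv : q ≠ v := fun h => hgv (by rw [← h]; exact Sym2.mem_mk_right p q)
        have hadjpq : G.Adj p q := G.mem_edgeSet.mp hgE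
        by_cases h1 : u ∈ s(p, q) <;> by_cases h2 : t ∈ s(p, q)
        · -- g = s(u,t)
          have hgut : s(p, q) = s(u, t) := (Sym2.mem_and_mem_iff hut).mp ⟨h1, h2⟩
          have hadjut : G.Adj u t := G.mem_edgeSet.mp (hgut ▸ hgE)
          refine ⟨Walk.cons hadjut Walk.nil, ?_, ?_, ?_⟩
          · simp [Walk.cons_isPath_iff, hut]
          · simp [Ne.symm huv, Ne.symm htv, huv]
          · simp [hgut]
        · -- u ∈ g, t ∉ g
          set r := Sym2.Mem.other h1 with hrdef
          have hr : s(u, r) = s(p, q) := Sym2.other_spec h1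
          have hru : r ≠ u := Sym2.other_ne (by
            rw [Sym2.mk_isDiag_iff]; exact hadjpq.ne) h1
          have hrv : r ≠ v := fun h => hgv (h ▸ (Sym2.other_mem h1))
          have hrt : r ≠ t := fun h => h2 (h ▸ (Sym2.other_mem h1))
          obtain ⟨R, hR, hRav⟩ := path_avoid h3 v u r t hrv hru htv hut.symm
          have hadjur : G.Adj u r := G.mem_edgeSet.mp (hr ▸ hgE)
          refine ⟨Walk.cons hadjur R, ?_, ?_, ?_⟩
          · exact (Walk.cons_isPath_iff _ _).mpr ⟨hR, fun h => (hRav u h).2 rfl⟩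
          · intro h
            rcases List.mem_cons.mp (by simpa [Walk.support_cons] using h) with h' | h'
            · exact huv h'.symm
            · exact (hRav v h').1 rfl
          · rw [Walk.edges_cons, ← hr]
            exact List.mem_cons_self
        · -- t ∈ g, u ∉ g
          set r := Sym2.Mem.other h2 with hrdef
          have hr : s(t, r) = s(p, q) := Sym2.other_spec h2
          have hrt : r ≠ t := Sym2.other_ne (by
            rw [Sym2.mk_isDiag_iff]; exact hadjpq.ne) h2
          have hrv : r ≠ v := fun h => hgv (h ▸ (Sym2.other_mem h2))
          have hru : r ≠ u := fun h => h1 (h ▸ (Sym2.other_mem h2))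
          obtain ⟨R, hR, hRav⟩ := path_avoid h3 v t u r huv hut hrv hrt
          have hadjrt : G.Adj r t := (G.mem_edgeSet.mp (hr ▸ hgE)).symm
          refine ⟨R.concat hadjrt, ?_, ?_, ?_⟩
          · exact isPath_concat' hR hadjrt (fun h => (hRav t h).2 rfl)
          · intro h
            rcases mem_concat_support h with h' | h'
            · exact (hRav v h').1 rfl
            · exact htv h'.symm
          · rw [Walk.edges_concat, List.concat_eq_append]
            refine List.mem_append_right _ ?_
            have hswap : s(r, t) = s(p, q) := by rw [Sym2.eq_swap]; exact hr
            rw [← hswap]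
            exact List.mem_singleton_self _
        · -- disjoint case
          have hup : u ≠ p := fun h => h1 (by rw [h]; exact Sym2.mem_mk_left p q)
          have huq : u ≠ q := fun h => h1 (by rw [h]; exact Sym2.mem_mk_right p q)
          have htp : t ≠ p := fun h => h2 (by rw [h]; exact Sym2.mem_mk_left p q)
          have htq : t ≠ q := fun h => h2 (by rw [h]; exact Sym2.mem_mk_right p q)
          exact big h3 huv htv hpv hqv hut hup huq htp htq hadjpq
    obtain ⟨π, hπp, hvπ, hgπ⟩ := hπ
    set body : G.Walk u v := π.concat hadj2.symm with hbody
    have hbodypath : body.IsPath := isPath_concat' hπp hadj2.symm hvπ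
    have hcyc : (Walk.cons hadj1 body).IsCycle := by
      refine (Walk.cons_isCycle_iff _ _).mpr ⟨hbodypath, ?_⟩
      intro hmem
      rw [hbody, Walk.edges_concat, List.concat_eq_append] at hmem
      rcases List.mem_append.mp hmem with h' | h'
      · exact hvπ (Walk.fst_mem_support_of_mem_edges π h')
      · simp only [List.mem_singleton] at h'
        rw [Sym2.eq_iff] at h'
        rcases h' with ⟨h'', _⟩ | ⟨_, h''⟩
        · exact htv h''.symm
        · exact hut h''
    have hcount := preim_count_cycle f hf w _ hcyc
    rw [← hA] at hcount
    have h3le : 3 ≤ (Walk.cons hadj1 body).edges.countP (fun e => decide (e ∈ A)) := by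
      rw [Walk.edges_cons, hbody, Walk.edges_concat, List.concat_eq_append,
        List.countP_cons, List.countP_append, List.countP_cons, List.countP_nil]
      have hd1 : (decide (s(v, u) ∈ A) : Bool) = true := by
        rw [hu]; exact decide_eq_true he₁
      have hd2 : (decide (s(t, v) ∈ A) : Bool) = true := by
        rw [Sym2.eq_swap, ht]; exact decide_eq_true he₂
      have hd3 : 0 < π.edges.countP (fun e => decide (e ∈ A)) := by
        rw [List.countP_pos_iff]
        exact ⟨g, hgπ, decide_eq_true hgA⟩
      rw [hd1, hd2]
      simp only [if_true]
      omega
    rcases hcount with h | h <;> omega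
  -- star at v ⊆ A
  have hall : ∀ y : V, G.Adj v y → s(v, y) ∈ A := by
    intro y hady
    by_cases hyu : y = u
    · rw [hyu, hu]; exact he₁
    by_cases hyt : y = t
    · rw [hyt, ht]; exact he₂
    obtain ⟨R, hR, hRav⟩ := path_avoid h3 v v y t hady.ne' hady.ne' htv htv
    set body : G.Walk y v := R.concat hadj2.symm with hbody
    have hbodypath : body.IsPath :=
      isPath_concat' hR hadj2.symm (fun h => (hRav v h).1 rfl)
    have hcyc : (Walk.cons hady body).IsCycle := by
      refine (Walk.cons_isCycle_iff _ _).mpr ⟨hbodypath, ?_⟩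
      intro hmem
      rw [hbody, Walk.edges_concat, List.concat_eq_append] at hmem
      rcases List.mem_append.mp hmem with h' | h'
      · exact (hRav v (vert_mem_support_of_mem_edges h' (Sym2.mem_mk_left v y))).1 rfl
      · simp only [List.mem_singleton] at h'
        rw [Sym2.eq_iff] at h'
        rcases h' with ⟨h'', _⟩ | ⟨_, h''⟩
        · exact htv h''.symm
        · exact hyt h''
    have hcount := preim_count_cycle f hf w _ hcyc
    rw [← hA] at hcount
    by_contra hnm
    have h1eq : (Walk.cons hady body).edges.countP (fun e => decide (e ∈ A)) = 1 := by
      rw [Walk.edges_cons, hbody, Walk.edges_concat, List.concat_eq_append,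
        List.countP_cons, List.countP_append, List.countP_cons, List.countP_nil]
      have hd1 : (decide (s(v, y) ∈ A) : Bool) = false := by
        exact decide_eq_false hnm
      have hd2 : (decide (s(t, v) ∈ A) : Bool) = true := by
        rw [Sym2.eq_swap, ht]; exact decide_eq_true he₂
      have hd3 : R.edges.countP (fun e => decide (e ∈ A)) = 0 := by
        rw [List.countP_eq_zero]
        intro e hemem
        simp only [decide_eq_true_eq]
        intro heA
        exact (hRav v (vert_mem_support_of_mem_edges hemem (hstar e heA))).1 rfl
      rw [hd1, hd2, hd3]
      simp
    rcases hcount with h | h <;> omega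
  refine ⟨v, ?_⟩
  ext e
  constructor
  · intro heA
    obtain ⟨heE, -⟩ := id heA
    exact ⟨heE, hstar e heA⟩
  · rintro ⟨heE, hve⟩
    have hosp := Sym2.other_spec hve
    rw [← hosp]
    exact hall _ (G.mem_edgeSet.mp (by rw [hosp]; exact heE))
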